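/- For every k ≥ 1, 2 ln 2 - 1 ≤ f(k) < 1/2, where f(k) = k^2 [ (1+1/k) ln(1+1/k) - 1/k ]. -/

import Mathlib

noncomputable def f (k : ℝ) : ℝ := k^2 * ((1 + 1/k) * Real.log (1 + 1/k) - 1/k)

/-- concavity of log: for `0 ≤ a ≤ b`, `a * log (1+b) ≤ b * log (1+a)`. -/
lemma key_log_concave (a b : ℝ) (ha : 0 ≤ a) (hab : a ≤ b) :
    a * Real.log (1 + b) ≤ b * Real.log (1 + a) := by
  rcases eq_or_lt_of_le (ha.trans hab) with hb | hb
  · have : a = 0 := le_antisymm (hab.trans hb.symm.le) ha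
    simp [this, ← hb]
  · have hb0 : (0:ℝ) < b := hb
    have hcon := strictConcaveOn_log_Ioi.concaveOn.2 (Set.mem_Ioi.2 one_pos)
      (Set.mem_Ioi.2 (by linarith : (0:ℝ) < 1 + b))
      (by rw [sub_nonneg]; exact div_le_one_of_le₀ hab hb0.le : (0:ℝ) ≤ 1 - a / b)
      (by positivity : (0:ℝ) ≤ a / b) (by ring)
    have h1 : (1 - a / b) • (1:ℝ) + (a / b) • (1 + b) = 1 + a := by
      simp only [smul_eq_mul]
      field_simp
      ring
    rw [h1] at hcon
    simp only [smul_eq_mul, Real.log_one, mul_zero, zero_add] at hcon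
    have h2 := mul_le_mul_of_nonneg_left hcon hb0.le
    have h3 : b * (a / b * Real.log (1 + b)) = a * Real.log (1 + b) := by
      field_simp
    linarith [h3 ▸ h2]

lemma hasDerivAt_mulLog (t : ℝ) (ht : (0:ℝ) < 1 + t) :
    HasDerivAt (fun s : ℝ => (1 + s) * Real.log (1 + s)) (Real.log (1 + t) + 1) t := by
  have hlog : HasDerivAt (fun s : ℝ => Real.log (1 + s)) (1 / (1 + t)) t := by
    simpa [Function.comp_def] using (Real.hasDerivAt_log ht.ne').comp t ((hasDerivAt_id t).const_add 1)
  have h := ((hasDerivAt_id t).const_add 1).mul hlog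
  exact h.congr_deriv (by simp [ht.ne'])

/-- Upper bound: for `x > 0`, `(1+x) log (1+x) - x < x^2/2`. -/
lemma upper_aux (x : ℝ) (hx : 0 < x) :
    (1 + x) * Real.log (1 + x) - x < x ^ 2 / 2 := by
  set F : ℝ → ℝ := fun s => s + s ^ 2 / 2 - (1 + s) * Real.log (1 + s) with hF
  have hderiv : ∀ t ∈ Set.Ici (0:ℝ), HasDerivAt F (t - Real.log (1 + t)) t := by
    intro t ht
    have ht1 : (0:ℝ) < 1 + t := by simp at ht; linarith
    have h1 : HasDerivAt (fun s : ℝ => s + s ^ 2 / 2) (1 + t) t := by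
      have := (hasDerivAt_id t).add (((hasDerivAt_pow 2 t)).div_const 2)
      exact this.congr_deriv (by norm_num)
    have := h1.sub (hasDerivAt_mulLog t ht1)
    exact this.congr_deriv (by ring)
  have hmono : StrictMonoOn F (Set.Ici 0) := by
    apply strictMonoOn_of_deriv_pos (convex_Ici 0)
    · intro t ht
      exact ((hderiv t ht).differentiableAt).continuousAt.continuousWithinAt
    · intro t ht
      rw [interior_Ici] at ht
      have ht0 : (0:ℝ) < t := ht
      rw [(hderiv t (le_of_lt ht0)).deriv]
      have := Real.log_lt_sub_one_of_pos (by linarith : (0:ℝ) < 1 + t)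
        (by intro h; simp at h; linarith)
      linarith
  have h0 : F 0 = 0 := by simp [hF]
  have := hmono (Set.self_mem_Ici) (Set.mem_Ici.2 hx.le) hx
  rw [h0] at this
  simp only [hF] at this
  linarith

/-- Lower bound: for `0 < x ≤ 1`, `(2 log 2 - 1) * x^2 ≤ (1+x) log (1+x) - x`. -/
lemma lower_aux (x : ℝ) (hx0 : 0 < x) (hx1 : x ≤ 1) :
    (2 * Real.log 2 - 1) * x ^ 2 ≤ (1 + x) * Real.log (1 + x) - x := by
  set c : ℝ := 2 * Real.log 2 - 1 with hc
  set H : ℝ → ℝ := fun s => (1 + s) * Real.log (1 + s) - s - c * s ^ 2 with hH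
  have hderiv : ∀ t : ℝ, (0:ℝ) < 1 + t → HasDerivAt H (Real.log (1 + t) - 2 * c * t) t := by
    intro t ht
    have h2 : HasDerivAt (fun s : ℝ => s + c * s ^ 2) (1 + c * (2 * t)) t := by
      have := (hasDerivAt_id t).add ((hasDerivAt_pow 2 t).const_mul c)
      exact this.congr_deriv (by norm_num)
    have := (hasDerivAt_mulLog t ht).sub h2
    have heq : H = fun s : ℝ => (1 + s) * Real.log (1 + s) - (s + c * s ^ 2) := by
      funext s; rw [hH]; ring
    rw [heq]
    exact this.congr_deriv (by ring)
  have hH0 : H 0 = 0 := by simp [hH]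
  have hH1 : H 1 = 0 := by
    show (1 + 1) * Real.log (1 + 1) - 1 - c * 1 ^ 2 = 0
    rw [hc, show (1:ℝ) + 1 = 2 by norm_num]
    ring
  by_cases hGx : 0 ≤ Real.log (1 + x) - 2 * c * x
  · -- H monotone on [0, x]
    have hmono : MonotoneOn H (Set.Icc 0 x) := by
      apply monotoneOn_of_deriv_nonneg (convex_Icc 0 x)
      · intro t ht
        have : (0:ℝ) < 1 + t := by have := ht.1; simp at this ⊢; linarith
        exact (hderiv t this).differentiableAt.continuousAt.continuousWithinAt
      · intro t ht
        rw [interior_Icc] at ht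
        have : (0:ℝ) < 1 + t := by linarith [ht.1]
        exact ((hderiv t this).differentiableAt).differentiableWithinAt
      · intro t ht
        rw [interior_Icc] at ht
        obtain ⟨ht0, htx⟩ := ht
        have ht1 : (0:ℝ) < 1 + t := by linarith
        rw [(hderiv t ht1).deriv]
        have hk := key_log_concave t x ht0.le htx.le
        -- x * log(1+t) ≥ t * log(1+x) ≥ t * (2cx)
        have h1 : t * (2 * c * x) ≤ t * Real.log (1 + x) := by
          apply mul_le_mul_of_nonneg_left _ ht0.le
          linarith
        have h2 : t * Real.log (1 + x) ≤ x * Real.log (1 + t) := hk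
        have h3 : t * (2 * c * x) ≤ x * Real.log (1 + t) := h1.trans h2
        have : 2 * c * t ≤ Real.log (1 + t) := by
          rw [← mul_le_mul_iff_right₀ hx0]
          nlinarith
        linarith
    have := hmono (Set.mem_Icc.2 ⟨le_refl 0, hx0.le⟩) (Set.mem_Icc.2 ⟨hx0.le, le_refl x⟩) hx0.le
    rw [hH0] at this
    simp only [hH] at this
    linarith
  · -- H antitone on [x, 1]
    push_neg at hGx
    have hanti : AntitoneOn H (Set.Icc x 1) := by
      apply antitoneOn_of_deriv_nonpos (convex_Icc x 1)
      · intro t ht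
        have : (0:ℝ) < 1 + t := by have := ht.1; simp at this ⊢; linarith
        exact (hderiv t this).differentiableAt.continuousAt.continuousWithinAt
      · intro t ht
        rw [interior_Icc] at ht
        have : (0:ℝ) < 1 + t := by linarith [ht.1]
        exact ((hderiv t this).differentiableAt).differentiableWithinAt
      · intro t ht
        rw [interior_Icc] at ht
        obtain ⟨hxt, ht1'⟩ := ht
        have ht1 : (0:ℝ) < 1 + t := by linarith
        rw [(hderiv t ht1).deriv]
        have hk := key_log_concave x t hx0.le hxt.le
        -- x * log(1+t) ≤ t * log(1+x) < t * 2cx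
        have ht0 : (0:ℝ) < t := hx0.trans hxt
        have h1 : t * Real.log (1 + x) ≤ t * (2 * c * x) := by
          apply mul_le_mul_of_nonneg_left _ ht0.le
          linarith
        have h3 : x * Real.log (1 + t) ≤ t * (2 * c * x) := hk.trans h1
        have : Real.log (1 + t) ≤ 2 * c * t := by
          rw [← mul_le_mul_iff_right₀ hx0]
          nlinarith
        linarith
    have := hanti (Set.mem_Icc.2 ⟨le_refl x, hx1⟩) (Set.mem_Icc.2 ⟨hx1, le_refl 1⟩) hx1
    rw [hH1] at this
    simp only [hH] at this
    linarith

theorem f_bounds (k : ℝ) (hk : 1 ≤ k) :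
    2 * Real.log 2 - 1 ≤ f k ∧ f k < 1/2 := by
  have hk0 : (0:ℝ) < k := lt_of_lt_of_le one_pos hk
  set x : ℝ := 1 / k with hxdef
  have hx0 : 0 < x := by positivity
  have hx1 : x ≤ 1 := by
    rw [hxdef]
    exact (div_le_one hk0).2 hk
  have hkx : k * x = 1 := by
    rw [hxdef]; field_simp
  have hk2 : (0:ℝ) < k ^ 2 := by positivity
  have hfx : f k = k ^ 2 * ((1 + x) * Real.log (1 + x) - x) := rfl
  constructor
  · have h := lower_aux x hx0 hx1
    have := mul_le_mul_of_nonneg_left h hk2.le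
    rw [hfx]
    calc 2 * Real.log 2 - 1 = k ^ 2 * ((2 * Real.log 2 - 1) * x ^ 2) := by
          rw [show k ^ 2 * ((2 * Real.log 2 - 1) * x ^ 2) = (2 * Real.log 2 - 1) * (k * x) ^ 2 by ring,
            hkx]; ring
      _ ≤ k ^ 2 * ((1 + x) * Real.log (1 + x) - x) := this
  · have h := upper_aux x hx0
    have := mul_lt_mul_of_pos_left h hk2
    rw [hfx]
    calc k ^ 2 * ((1 + x) * Real.log (1 + x) - x) < k ^ 2 * (x ^ 2 / 2) := this
      _ = 1 / 2 := by
          rw [show k ^ 2 * (x ^ 2 / 2) = (k * x) ^ 2 / 2 by ring, hkx]; norm_num
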